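/- Decomposition bound for the optimality gap under entropy-regularized greediness: Let S, A be finite nonempty sets, P a transition kernel, r ∈ ℝ^{S×A}, γ ∈ (0,1), τ > 0, and h ∈ ℝ^{S×A}. Let π_g be the softmax policy π_g(a|s) = exp(h(s,a)/τ) / Σ_b exp(h(s,b)/τ), and let π_* be an optimal policy, i.e. a policy such that q_{π_*} ≥ q_π componentwise for every policy π; write q_* = q_{π_*}. Then, componentwise, q_* − q_{π_g} ≤ (I − γ P_{π_*})^{-1} ( T_{π_g} h + γ τ P H(π_g) − h ) − (I − γ P_{π_g})^{-1} ( T_{π_g} h − h ). -/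

import Mathlib

open Finset

noncomputable section

/-- A transition kernel on a finite MDP: `P s a s'` is the probability of moving to `s'`
from `s` after action `a`. -/
def IsKernel {S A : Type*} [Fintype S] (P : S → A → S → ℝ) : Prop :=
  (∀ s a s', 0 ≤ P s a s') ∧ ∀ s a, ∑ s', P s a s' = 1

/-- A policy: `π s a` is the probability of action `a` in state `s`. -/
def IsPolicy {S A : Type*} [Fintype A] (π : S → A → ℝ) : Prop :=
  (∀ s a, 0 ≤ π s a) ∧ ∀ s, ∑ a, π s a = 1

/-- `(P v)(s,a) = ∑_{s'} P(s'|s,a) v(s')`. -/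
def kerApp {S A : Type*} [Fintype S] (P : S → A → S → ℝ) (v : S → ℝ) : S → A → ℝ :=
  fun s a => ∑ s', P s a s' * v s'

/-- `⟨f₁,f₂⟩(s) = ∑_a f₁(s,a) f₂(s,a)`. -/
def dotSA {S A : Type*} [Fintype A] (f₁ f₂ : S → A → ℝ) : S → ℝ :=
  fun s => ∑ a, f₁ s a * f₂ s a

/-- The policy-induced transition operator `P_π q = P ⟨π, q⟩` on `ℝ^{S×A}`. -/
def Ppi {S A : Type*} [Fintype S] [Fintype A] (P : S → A → S → ℝ) (π : S → A → ℝ)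
    (q : S → A → ℝ) : S → A → ℝ :=
  kerApp P (dotSA π q)

/-- The Bellman evaluation operator `T_π q = r + γ P_π q`. -/
def bellman {S A : Type*} [Fintype S] [Fintype A] (P : S → A → S → ℝ) (r : S → A → ℝ)
    (γ : ℝ) (π : S → A → ℝ) (q : S → A → ℝ) : S → A → ℝ :=
  fun s a => r s a + γ * Ppi P π q s a

/-- The Shannon entropy of a policy, `H(π)(s) = -∑_a π(a|s) ln π(a|s)` (with `0 ln 0 = 0`). -/
def entPol {S A : Type*} [Fintype A] (π : S → A → ℝ) : S → ℝ :=
  fun s => -∑ a, π s a * Real.log (π s a)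


lemma Ppi_sub_apply {S A : Type*} [Fintype S] [Fintype A]
    (P : S → A → S → ℝ) (π x y : S → A → ℝ) (s : S) (a : A) :
    Ppi P π x s a - Ppi P π y s a = Ppi P π (fun s a => x s a - y s a) s a := by
  simp only [Ppi, kerApp, dotSA, mul_sub, sub_mul, Finset.sum_sub_distrib]

/-- Convex-combination bound for `Ppi`. -/
lemma Ppi_le_const {S A : Type*} [Fintype S] [Fintype A]
    {P : S → A → S → ℝ} (hP : IsKernel P) {π : S → A → ℝ} (hπ : IsPolicy π)
    {q : S → A → ℝ} {M : ℝ} (hq : ∀ s a, q s a ≤ M) (s : S) (a : A) :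
    Ppi P π q s a ≤ M := by
  have hdot : ∀ s', dotSA π q s' ≤ M := by
    intro s'
    calc dotSA π q s' ≤ ∑ b, π s' b * M :=
          Finset.sum_le_sum fun b _ => mul_le_mul_of_nonneg_left (hq s' b) (hπ.1 s' b)
      _ = M := by rw [← Finset.sum_mul, hπ.2 s', one_mul]
  calc Ppi P π q s a ≤ ∑ s', P s a s' * M :=
        Finset.sum_le_sum fun s' _ => mul_le_mul_of_nonneg_left (hdot s') (hP.1 s a s')
    _ = M := by rw [← Finset.sum_mul, hP.2 s a, one_mul]

/-- Comparison principle for `I - γ P_π`. -/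
lemma comparison {S A : Type*} [Fintype S] [Fintype A] [Nonempty S] [Nonempty A]
    {P : S → A → S → ℝ} (hP : IsKernel P) {π : S → A → ℝ} (hπ : IsPolicy π)
    {γ : ℝ} (hγ0 : 0 < γ) (hγ1 : γ < 1) {x y : S → A → ℝ}
    (hxy : ∀ s a, x s a - γ * Ppi P π x s a ≤ y s a - γ * Ppi P π y s a) :
    ∀ s a, x s a ≤ y s a := by
  obtain ⟨⟨s₀, a₀⟩, hmax⟩ := Finite.exists_max (fun p : S × A => x p.1 p.2 - y p.1 p.2)
  set M := x s₀ a₀ - y s₀ a₀ with hM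
  have hd : ∀ s a, x s a - y s a ≤ M := fun s a => hmax (s, a)
  have hPle : Ppi P π (fun s a => x s a - y s a) s₀ a₀ ≤ M := Ppi_le_const hP hπ hd s₀ a₀
  have h1 : M ≤ γ * (Ppi P π x s₀ a₀ - Ppi P π y s₀ a₀) := by
    have := hxy s₀ a₀; linarith [this]
  rw [Ppi_sub_apply] at h1
  have hM0 : M ≤ 0 := by nlinarith
  intro s a
  have := hd s a
  linarith

/-- The operator `q ↦ q - γ • Ppi P π q` as a linear map. -/
def LmapOf {S A : Type*} [Fintype S] [Fintype A] (P : S → A → S → ℝ) (π : S → A → ℝ)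
    (γ : ℝ) : (S → A → ℝ) →ₗ[ℝ] (S → A → ℝ) where
  toFun q := q - γ • Ppi P π q
  map_add' x y := by
    funext s a
    simp only [Pi.add_apply, Pi.sub_apply, Pi.smul_apply, smul_eq_mul, Ppi, kerApp, dotSA,
      mul_add, Finset.sum_add_distrib]
    ring
  map_smul' c x := by
    funext s a
    simp only [Pi.smul_apply, Pi.sub_apply, smul_eq_mul, RingHom.id_apply, Ppi, kerApp, dotSA]
    have h1 : ∀ s', (∑ b, π s' b * (c * x s' b)) = c * ∑ b, π s' b * x s' b := by
      intro s'; rw [Finset.mul_sum]; exact Finset.sum_congr rfl fun b _ => by ring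
    simp only [h1]
    have h2 : (∑ s', P s a s' * (c * ∑ b, π s' b * x s' b))
        = c * ∑ s', P s a s' * ∑ b, π s' b * x s' b := by
      rw [Finset.mul_sum]; exact Finset.sum_congr rfl fun s' _ => by ring
    rw [h2]; ring

lemma LmapOf_apply {S A : Type*} [Fintype S] [Fintype A] (P : S → A → S → ℝ) (π : S → A → ℝ)
    (γ : ℝ) (q : S → A → ℝ) (s : S) (a : A) :
    LmapOf P π γ q s a = q s a - γ * Ppi P π q s a := rfl




lemma softmax_isPolicy {S A : Type*} [Fintype A] [Nonempty A] (tau : ℝ) (htau : 0 < tau)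
    (h πg : S → A → ℝ)
    (hπg : ∀ s a, πg s a = Real.exp (h s a / tau) / ∑ b, Real.exp (h s b / tau)) :
    IsPolicy πg := by
  have hZ : ∀ s : S, 0 < ∑ b, Real.exp (h s b / tau) :=
    fun s => Finset.sum_pos (fun b _ => Real.exp_pos _) Finset.univ_nonempty
  constructor
  · intro s a; rw [hπg]; positivity
  · intro s
    simp only [hπg]
    rw [← Finset.sum_div, div_self (ne_of_gt (hZ s))]

lemma softmax_lse {S A : Type*} [Fintype A] [Nonempty A] (tau : ℝ) (htau : 0 < tau)
    (h πg : S → A → ℝ)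
    (hπg : ∀ s a, πg s a = Real.exp (h s a / tau) / ∑ b, Real.exp (h s b / tau))
    (πstar : S → A → ℝ) (hπstar : IsPolicy πstar) (s : S) :
    dotSA πstar h s ≤ dotSA πg h s + tau * entPol πg s := by
  set Z := ∑ b, Real.exp (h s b / tau) with hZdef
  have hZ : 0 < Z := Finset.sum_pos (fun b _ => Real.exp_pos _) Finset.univ_nonempty
  have hpol : IsPolicy πg := softmax_isPolicy tau htau h πg hπg
  have hlog : ∀ a, Real.log (πg s a) = h s a / tau - Real.log Z := by
    intro a; rw [hπg, ← hZdef, Real.log_div (Real.exp_ne_zero _) (ne_of_gt hZ), Real.log_exp]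
  have hsum : (∑ a, πg s a * Real.log (πg s a))
      = (∑ a, πg s a * h s a) / tau - Real.log Z := by
    have hterm : ∀ a, πg s a * Real.log (πg s a)
        = πg s a * h s a / tau - πg s a * Real.log Z := by
      intro a; rw [hlog a]; ring
    rw [Finset.sum_congr rfl fun a _ => hterm a, Finset.sum_sub_distrib,
      ← Finset.sum_div, ← Finset.sum_mul, hpol.2 s, one_mul]
  have hid : dotSA πg h s + tau * entPol πg s = tau * Real.log Z := by
    simp only [entPol, dotSA, hsum]
    field_simp
    ring
  have hub : ∀ a, h s a ≤ tau * Real.log Z := by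
    intro a
    have h1 : Real.exp (h s a / tau) ≤ Z :=
      Finset.single_le_sum (f := fun b => Real.exp (h s b / tau))
        (fun b _ => (Real.exp_pos _).le) (Finset.mem_univ a)
    have h2 : h s a / tau ≤ Real.log Z := by
      rw [← Real.log_exp (h s a / tau)]
      exact Real.log_le_log (Real.exp_pos _) h1
    calc h s a = tau * (h s a / tau) := by field_simp
      _ ≤ tau * Real.log Z := mul_le_mul_of_nonneg_left h2 htau.le
  rw [hid]
  calc dotSA πstar h s ≤ ∑ a, πstar s a * (tau * Real.log Z) :=
        Finset.sum_le_sum fun a _ => mul_le_mul_of_nonneg_left (hub a) (hπstar.1 s a)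
    _ = tau * Real.log Z := by rw [← Finset.sum_mul, hπstar.2 s, one_mul]



/-- Decomposition bound for the optimality gap under
entropy-regularized greediness. -/
theorem optimality_gap_decomposition_bound
    {S A : Type*} [Fintype S] [Fintype A] [Nonempty S] [Nonempty A]
    (P : S → A → S → ℝ) (hP : IsKernel P)
    (r : S → A → ℝ) (γ : ℝ) (hγ0 : 0 < γ) (hγ1 : γ < 1)
    (tau : ℝ) (htau : 0 < tau) (h : S → A → ℝ)
    (πg : S → A → ℝ)
    (hπg : ∀ s a, πg s a = Real.exp (h s a / tau) / ∑ b, Real.exp (h s b / tau))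
    (πstar : S → A → ℝ) (hπstar : IsPolicy πstar)
    (qstar : S → A → ℝ) (hqstar : qstar = bellman P r γ πstar qstar)
    (hopt : ∀ π : S → A → ℝ, IsPolicy π →
      ∀ qπ : S → A → ℝ, qπ = bellman P r γ π qπ → ∀ s a, qπ s a ≤ qstar s a)
    (qg : S → A → ℝ) (hqg : qg = bellman P r γ πg qg)
    (Lstar Lg : (S → A → ℝ) → (S → A → ℝ))
    (hLstar : ∀ q, Lstar q = q - γ • Ppi P πstar q)
    (hLg : ∀ q, Lg q = q - γ • Ppi P πg q) :
    ∀ s a, qstar s a - qg s a ≤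
      Function.invFun Lstar
          (fun s a => bellman P r γ πg h s a + γ * tau * kerApp P (entPol πg) s a - h s a) s a
        - Function.invFun Lg (bellman P r γ πg h - h) s a := by
  have hπgpol : IsPolicy πg := softmax_isPolicy tau htau h πg hπg
  set w1 : S → A → ℝ :=
    fun s a => bellman P r γ πg h s a + γ * tau * kerApp P (entPol πg) s a - h s a with hw1
  set w2 : S → A → ℝ := bellman P r γ πg h - h with hw2
  have hqgp : ∀ s a, qg s a = r s a + γ * Ppi P πg qg s a := by
    intro s a; conv_lhs => rw [hqg]
    rfl
  have hqstarp : ∀ s a, qstar s a = r s a + γ * Ppi P πstar qstar s a := by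
    intro s a; conv_lhs => rw [hqstar]
    rfl
  -- pointwise form of Lg and Lstar
  have hLgp : ∀ q s a, Lg q s a = q s a - γ * Ppi P πg q s a := by
    intro q s a; rw [hLg]; simp [Pi.sub_apply, Pi.smul_apply, smul_eq_mul]
  have hLstarp : ∀ q s a, Lstar q s a = q s a - γ * Ppi P πstar q s a := by
    intro q s a; rw [hLstar]; simp [Pi.sub_apply, Pi.smul_apply, smul_eq_mul]
  -- Lg (qg - h) = w2
  have hLgv : Lg (qg - h) = w2 := by
    funext s a
    rw [hLgp]
    rw [show (qg - h) = (fun s a => qg s a - h s a) from rfl]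
    rw [← Ppi_sub_apply]
    simp only [hw2, Pi.sub_apply, bellman]
    have := hqgp s a
    ring_nf
    linarith [this]
  -- Lg injective
  have hLginj : Function.Injective Lg := by
    intro x y hxy
    have hpt : ∀ s a, x s a - γ * Ppi P πg x s a = y s a - γ * Ppi P πg y s a := by
      intro s a
      have := congrFun (congrFun hxy s) a
      rwa [hLgp, hLgp] at this
    funext s a
    exact le_antisymm
      (comparison hP hπgpol hγ0 hγ1 (fun s a => (hpt s a).le) s a)
      (comparison hP hπgpol hγ0 hγ1 (fun s a => (hpt s a).ge) s a)
  have hinv_g : Function.invFun Lg w2 = qg - h := by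
    have : Lg (Function.invFun Lg w2) = w2 := Function.invFun_eq ⟨qg - h, hLgv⟩
    exact hLginj (this.trans hLgv.symm)
  -- Lstar is bijective
  have hLstar_eq : Lstar = LmapOf P πstar γ := by
    funext q; rw [hLstar]; rfl
  have hinjstar : Function.Injective (LmapOf P πstar γ) := by
    intro x y hxy
    have hpt : ∀ s a, x s a - γ * Ppi P πstar x s a = y s a - γ * Ppi P πstar y s a := by
      intro s a
      have := congrFun (congrFun hxy s) a
      simpa [LmapOf_apply] using this
    funext s a
    exact le_antisymm
      (comparison hP hπstar hγ0 hγ1 (fun s a => (hpt s a).le) s a)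
      (comparison hP hπstar hγ0 hγ1 (fun s a => (hpt s a).ge) s a)
  have hsurj : Function.Surjective (LmapOf P πstar γ) :=
    (LinearMap.injective_iff_surjective).mp hinjstar
  obtain ⟨u, hu⟩ := hsurj w1
  have huL : Lstar u = w1 := by rw [hLstar_eq]; exact hu
  have hinvL : Lstar (Function.invFun Lstar w1) = w1 := Function.invFun_eq ⟨u, huL⟩
  set y : S → A → ℝ := Function.invFun Lstar w1 with hy
  have hys : ∀ s a, y s a - γ * Ppi P πstar y s a = w1 s a := by
    intro s a
    have := congrFun (congrFun hinvL s) a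
    rwa [hLstarp] at this
  -- key inequality from log-sum-exp
  have hker : ∀ s a, kerApp P (dotSA πstar h) s a
      ≤ kerApp P (dotSA πg h) s a + tau * kerApp P (entPol πg) s a := by
    intro s a
    have hrhs : kerApp P (dotSA πg h) s a + tau * kerApp P (entPol πg) s a
        = ∑ s', P s a s' * (dotSA πg h s' + tau * entPol πg s') := by
      simp only [kerApp]
      rw [Finset.mul_sum, ← Finset.sum_add_distrib]
      exact Finset.sum_congr rfl fun s' _ => by ring
    rw [hrhs]
    exact Finset.sum_le_sum fun s' _ =>
      mul_le_mul_of_nonneg_left (softmax_lse tau htau h πg hπg πstar hπstar s') (hP.1 s a s')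
  -- qstar - h ≤ y via comparison
  have hcomp : ∀ s a, qstar s a - h s a ≤ y s a := by
    have hhyp : ∀ s a,
        (fun s a => qstar s a - h s a) s a
          - γ * Ppi P πstar (fun s a => qstar s a - h s a) s a
        ≤ y s a - γ * Ppi P πstar y s a := by
      intro s a
      rw [hys s a, ← Ppi_sub_apply]
      simp only [hw1, bellman]
      have h1 := hqstarp s a
      have h2 := hker s a
      have h3 : Ppi P πstar h s a = kerApp P (dotSA πstar h) s a := rfl
      have h4 : Ppi P πg h s a = kerApp P (dotSA πg h) s a := rfl
      have h5 : γ * kerApp P (dotSA πstar h) s a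
          ≤ γ * (kerApp P (dotSA πg h) s a + tau * kerApp P (entPol πg) s a) :=
        mul_le_mul_of_nonneg_left h2 hγ0.le
      rw [h3, h4] at *
      nlinarith [h5]
    exact comparison hP hπstar hγ0 hγ1 hhyp
  intro s a
  have h1 := hcomp s a
  have h2 : Function.invFun Lg w2 s a = qg s a - h s a := by
    rw [hinv_g]; rfl
  rw [h2]
  linarith

end
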